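/- Suppose r : [0,∞) → (0,∞) is twice differentiable, ‖v(t)‖ → 0 as t → ∞, and r satisfies the differential inequality d²r/dt² ≥ −K1‖v‖ − (K2/2)r + K2·R with K1, K2, R > 0. Then r(t) does not converge to 0 as t → ∞. -/

import Mathlib

open Set Filter

/-- Helper: if `f` has nonnegative derivative on `[T,∞)` then `f T ≤ f t` for `t ≥ T`. -/
lemma mono_from_deriv (T : ℝ) (f f' : ℝ → ℝ)
    (hf : ∀ t ≥ T, HasDerivAt f (f' t) t)
    (hf' : ∀ t ≥ T, 0 ≤ f' t) : ∀ t ≥ T, f T ≤ f t := by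
  have mono : MonotoneOn f (Set.Ici T) := by
    apply monotoneOn_of_deriv_nonneg (convex_Ici T)
      (fun x hx => (hf x hx).continuousAt.continuousWithinAt)
    · rw [interior_Ici]
      exact fun x hx => (hf x (le_of_lt hx)).differentiableAt.differentiableWithinAt
    · intro x hx
      rw [interior_Ici] at hx
      rw [(hf x hx.le).deriv]
      exact hf' x hx.le
  intro t ht
  exact mono (self_mem_Ici) ht ht

/-- If `r > 0` satisfies `r'' ≥ −K1‖v‖ − (K2/2)r + K2 R` with `‖v(t)‖ → 0`, then `r`
does not converge to `0` at infinity. -/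
theorem r_not_tendsto_zero (K1 K2 R : ℝ) (hK1 : 0 < K1) (hK2 : 0 < K2) (hR : 0 < R)
    (r r' r'' vn : ℝ → ℝ)
    (hrpos : ∀ t ≥ (0:ℝ), 0 < r t)
    (hr1 : ∀ t ≥ (0:ℝ), HasDerivAt r (r' t) t)
    (hr2 : ∀ t ≥ (0:ℝ), HasDerivAt r' (r'' t) t)
    (hvn : ∀ t ≥ (0:ℝ), 0 ≤ vn t)
    (hv : Filter.Tendsto vn Filter.atTop (nhds 0))
    (hineq : ∀ t ≥ (0:ℝ), r'' t ≥ -K1 * vn t - K2 / 2 * r t + K2 * R) :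
    ¬ Filter.Tendsto r Filter.atTop (nhds 0) := by
  intro hcon
  set c : ℝ := K2 * R / 2 with hc
  have hcpos : 0 < c := by positivity
  have hε : (0:ℝ) < K2 * R / (4 * K1) := by positivity
  have h1 : ∀ᶠ t in atTop, vn t < K2 * R / (4 * K1) :=
    hv.eventually (Iio_mem_nhds hε)
  have h2 : ∀ᶠ t in atTop, r t < R / 2 :=
    hcon.eventually (Iio_mem_nhds (by positivity))
  obtain ⟨T0, hT0⟩ := (h1.and h2).exists_forall_of_atTop
  set T : ℝ := max T0 0 with hT
  have hT0' : 0 ≤ T := le_max_right _ _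
  -- on [T,∞), r'' ≥ c
  have key : ∀ t ≥ T, c ≤ r'' t := by
    intro t ht
    have ht0 : 0 ≤ t := le_trans hT0' ht
    have htT0 : T0 ≤ t := le_trans (le_max_left _ _) ht
    obtain ⟨hv1, hr1'⟩ := hT0 t htT0
    have h3 := hineq t ht0
    have hA : K1 * vn t ≤ K2 * R / 4 := by
      have := mul_le_mul_of_nonneg_left hv1.le hK1.le
      calc K1 * vn t ≤ K1 * (K2 * R / (4 * K1)) := this
        _ = K2 * R / 4 := by field_simp
    have hB : K2 / 2 * r t ≤ K2 * R / 4 := by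
      have := mul_le_mul_of_nonneg_left hr1'.le (by positivity : (0:ℝ) ≤ K2 / 2)
      calc K2 / 2 * r t ≤ K2 / 2 * (R / 2) := this
        _ = K2 * R / 4 := by ring
    have : -K1 * vn t - K2 / 2 * r t + K2 * R ≥ c := by
      simp only [hc]; nlinarith
    linarith
  -- r' t ≥ r' T + c (t - T)
  have step1 : ∀ t ≥ T, r' T - c * T ≤ r' t - c * t := by
    apply mono_from_deriv T (fun x => r' x - c * x) (fun x => r'' x - c)
    · intro t ht
      exact ((hr2 t (le_trans hT0' ht)).sub ((hasDerivAt_id t).const_mul c)).congr_deriv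
        (by simp)
    · intro t ht
      have := key t ht
      linarith
  -- r t ≥ r T + r' T (t - T) + c (t-T)²/2
  have step2 : ∀ t ≥ T,
      r T - r' T * T - c / 2 * (T - T) ^ 2 ≤ r t - r' T * t - c / 2 * (t - T) ^ 2 := by
    apply mono_from_deriv T (fun x => r x - r' T * x - c / 2 * (x - T) ^ 2)
      (fun x => r' x - r' T - c * (x - T))
    · intro t ht
      have hpow : HasDerivAt (fun x : ℝ => (x - T) ^ 2) (2 * (t - T) ^ 1 * 1) t :=
        ((hasDerivAt_id t).sub_const T).pow 2
      have h4 : HasDerivAt (fun x : ℝ => c / 2 * (x - T) ^ 2) (c / 2 * (2 * (t - T) ^ 1 * 1)) t :=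
        hpow.const_mul (c / 2)
      have h5 := ((hr1 t (le_trans hT0' ht)).sub ((hasDerivAt_id t).const_mul (r' T))).sub h4
      exact h5.congr_deriv (by ring)
    · intro t ht
      have := step1 t ht
      nlinarith
  -- now contradiction at large t
  set s : ℝ := max 1 (2 / c * (|r' T| + R / 2 + 1)) with hs
  have hs1 : 1 ≤ s := le_max_left _ _
  have hs2 : 2 / c * (|r' T| + R / 2 + 1) ≤ s := le_max_right _ _
  have hspos : 0 < s := lt_of_lt_of_le one_pos hs1
  have ht : T ≤ T + s := by linarith
  have hbig : c / 2 * s ^ 2 ≥ |r' T| * s + R / 2 := by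
    have h6 : c / 2 * s ≥ |r' T| + R / 2 + 1 := by
      have := mul_le_mul_of_nonneg_left hs2 (by positivity : (0:ℝ) ≤ c / 2)
      calc |r' T| + R / 2 + 1 = c / 2 * (2 / c * (|r' T| + R / 2 + 1)) := by
            field_simp
        _ ≤ c / 2 * s := this
    nlinarith [abs_nonneg (r' T), hR]
  have h7 := step2 (T + s) ht
  have h8 : r (T + s) ≥ r T + r' T * s + c / 2 * s ^ 2 := by
    have : (T + s - T) = s := by ring
    rw [this] at h7
    nlinarith
  have hrT : 0 < r T := hrpos T hT0'
  have h9 : r (T + s) < R / 2 := (hT0 (T + s) (by linarith [le_max_left T0 (0:ℝ)])).2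
  have h10 : r' T * s ≥ -(|r' T| * s) := by
    have := neg_abs_le (r' T)
    nlinarith
  linarith
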